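/- With the same data and definitions as in the n = 2 formulas of Section 5, additionally set â₁ = (12(2L₁ω₁ + 3L₂ω₁ + L₁ω₂) − 5L₁(4ρ₁L₁ + 3ρ₁L₂ + ρ₂L₂))/(36(L₁ + L₂)) and â₂ = (12(L₁ω₂ + L₂ω₁) + 5L₁L₂(ρ₁ − ρ₂))/(12(L₁ + L₂)). Then â₂ = â₁ + b̂₁L₁ + ĉ₁L₁² + d̂₁L₁³, i.e. the estimated spline is continuous at the interior knot. -/
import Mathlib

theorem stmt10 (L₁ L₂ ω₁ ω₂ ρ₁ ρ₂ a₁ a₂ b₁ c₁ d₁ : ℝ)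
    (hL₁ : 0 < L₁) (hL₂ : 0 < L₂)
    (ha₁ : a₁ = (12 * (2 * L₁ * ω₁ + 3 * L₂ * ω₁ + L₁ * ω₂)
        - 5 * L₁ * (4 * ρ₁ * L₁ + 3 * ρ₁ * L₂ + ρ₂ * L₂)) / (36 * (L₁ + L₂)))
    (ha₂ : a₂ = (12 * (L₁ * ω₂ + L₂ * ω₁) + 5 * L₁ * L₂ * (ρ₁ - ρ₂)) / (12 * (L₁ + L₂)))
    (hb₁ : b₁ = 0)
    (hc₁ : c₁ = (12 * (ω₁ - ω₂) + 5 * (2 * ρ₁ * L₁ + ρ₁ * L₂ + ρ₂ * L₂)) / (2 * L₁ * (L₁ + L₂)))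
    (hd₁ : d₁ = (60 * (ω₂ - ω₁) - 5 * (8 * ρ₁ * L₁ + 3 * ρ₁ * L₂ + 5 * ρ₂ * L₂)) / (9 * L₁ ^ 2 * (L₁ + L₂))) :
    a₂ = a₁ + b₁ * L₁ + c₁ * L₁ ^ 2 + d₁ * L₁ ^ 3 := by
  subst ha₁ ha₂ hb₁ hc₁ hd₁
  have h1 : L₁ ≠ 0 := ne_of_gt hL₁
  have h2 : L₁ + L₂ ≠ 0 := by positivity
  field_simp
  ring
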